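/- For a range-invariant A ⊆ ℝ^ω, there is a function f : ℝ^{<ω} → ℝ such that every countable set of reals closed under f has all its enumerations in A, if and only if there is a function F : ℝ^{<ω} → 𝒫_{ω₁}(ℝ) with the same property (every countable a closed under F, i.e. F(s) ⊆ a for all finite sequences s from a, has all enumerations in A) — provided every relation on the reals can be uniformized. -/
import Mathlib


/-- A payoff set `A ⊆ ℝ^ω` is range-invariant if membership depends only on the range. -/
def RangeInvariant (A : Set (ℕ → ℝ)) : Prop :=
  ∀ x y : ℕ → ℝ, Set.range x = Set.range y → (x ∈ A ↔ y ∈ A)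

open Classical in
/-- Auxiliary single-valued closure function built from an enumeration `g`. -/
noncomputable def auxF (g : List ℝ → ℕ → ℝ) : List ℝ → ℝ
| [] => 0
| [x] => if h : ∃ n : ℕ, x = (n : ℝ) then ((h.choose + 1 : ℕ) : ℝ) else 0
| x :: s => if h : ∃ n : ℕ, x = (n : ℝ) then g s h.choose else 0

lemma auxF_nil (g : List ℝ → ℕ → ℝ) : auxF g [] = 0 := rfl

lemma auxF_single (g : List ℝ → ℕ → ℝ) (n : ℕ) :
    auxF g [(n : ℝ)] = ((n + 1 : ℕ) : ℝ) := by
  have h : ∃ m : ℕ, ((n : ℝ)) = (m : ℝ) := ⟨n, rfl⟩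
  have hc : h.choose = n := Nat.cast_injective h.choose_spec.symm
  simp only [auxF, dif_pos h, hc]

lemma auxF_cons (g : List ℝ → ℕ → ℝ) (n : ℕ) (y : ℝ) (s : List ℝ) :
    auxF g ((n : ℝ) :: y :: s) = g (y :: s) n := by
  have h : ∃ m : ℕ, ((n : ℝ)) = (m : ℝ) := ⟨n, rfl⟩
  have hc : h.choose = n := Nat.cast_injective h.choose_spec.symm
  simp only [auxF, dif_pos h, hc]

/-- For a range-invariant `A ⊆ ℝ^ω`, assuming every total relation on the reals can be
uniformized: there is `f : ℝ^{<ω} → ℝ` such that every countable set of reals closed under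
`f` has all its enumerations in `A`, iff there is `F : ℝ^{<ω} → 𝒫_{ω₁}(ℝ)` (i.e. with
countable values) such that every countable set of reals closed under `F` (meaning
`F(s) ⊆ a` for all finite sequences `s` from `a`) has all its enumerations in `A`. -/
theorem closure_function_iff_countable_valued_closure_function
    (A : Set (ℕ → ℝ)) (hA : RangeInvariant A)
    (huni : ∀ R : ℝ → ℝ → Prop, (∀ x, ∃ y, R x y) → ∃ g : ℝ → ℝ, ∀ x, R x (g x)) :
    (∃ f : List ℝ → ℝ, ∀ a : Set ℝ, a.Countable →
        (∀ s : List ℝ, (∀ r ∈ s, r ∈ a) → f s ∈ a) →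
        ∀ x : ℕ → ℝ, Set.range x = a → x ∈ A) ↔
    (∃ F : List ℝ → Set ℝ, (∀ s, (F s).Countable) ∧
        ∀ a : Set ℝ, a.Countable →
        (∀ s : List ℝ, (∀ r ∈ s, r ∈ a) → F s ⊆ a) →
        ∀ x : ℕ → ℝ, Set.range x = a → x ∈ A) := by
  constructor
  · rintro ⟨f, hf⟩
    refine ⟨fun s => {f s}, fun s => Set.countable_singleton _, ?_⟩
    intro a ha hcl x hx
    exact hf a ha (fun s hs => hcl s hs rfl) x hx
  · rintro ⟨F, hFc, hF⟩
    -- enumerate each countable set `{0} ∪ F s ∪ F []`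
    have hG : ∀ s : List ℝ, ∃ g : ℕ → ℝ,
        insert (0 : ℝ) (F s ∪ F []) = Set.range g := by
      intro s
      exact Set.Countable.exists_eq_range
        (((hFc s).union (hFc [])).insert 0) ⟨0, Set.mem_insert _ _⟩
    choose g hg using hG
    refine ⟨auxF g, ?_⟩
    intro a ha hcl x hx
    -- 0 ∈ a
    have h0 : (0 : ℝ) ∈ a := by
      have := hcl [] (by simp)
      rwa [auxF_nil] at this
    -- all naturals are in a
    have hnat : ∀ n : ℕ, ((n : ℝ)) ∈ a := by
      intro n
      induction n with
      | zero => simpa using h0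
      | succ n ih =>
        have := hcl [(n : ℝ)] (by simpa using ih)
        rwa [auxF_single] at this
    -- a is closed under G, for nonempty lists
    have hGsub : ∀ y : ℝ, ∀ s : List ℝ, (∀ r ∈ y :: s, r ∈ a) →
        insert (0 : ℝ) (F (y :: s) ∪ F []) ⊆ a := by
      intro y s hs z hz
      rw [hg] at hz
      obtain ⟨n, rfl⟩ := hz
      have hmem : ∀ r ∈ ((n : ℝ) :: y :: s), r ∈ a := by
        intro r hr
        rcases List.mem_cons.mp hr with h | h
        · subst h; exact hnat n
        · exact hs r h
      have := hcl ((n : ℝ) :: y :: s) hmem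
      rwa [auxF_cons] at this
    -- hence a is closed under F
    have hFsub : ∀ s : List ℝ, (∀ r ∈ s, r ∈ a) → F s ⊆ a := by
      intro s hs
      cases s with
      | nil =>
        have := hGsub 0 [] (by simpa using h0)
        exact fun z hz => this (Set.mem_insert_iff.mpr (Or.inr (Or.inr hz)))
      | cons y t =>
        have := hGsub y t hs
        exact fun z hz => this (Set.mem_insert_iff.mpr (Or.inr (Or.inl hz)))
    exact hF a ha hFsub x hx
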